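/- Let 0 → V' → V → V'' → 0 be an exact sequence of finite-dimensional filtered vector spaces over a field k (with V' carrying the induced filtration and V'' the quotient filtration), where V ≠ 0. Then ν_V = (dim V'/dim V)·ν_{V'} + (dim V''/dim V)·ν_{V''}. -/

import Mathlib

open MeasureTheory Set Filter Module

/-- `μ` is the Borel probability measure associated to the filtration `F` of the
finite-dimensional vector space `V`: it is characterized by
`μ([a,∞)) = dim F_a V / dim V` for every `a` (and is the zero measure if `V = 0`). -/
def IsAssocMeasure {k V : Type*} [Field k] [AddCommGroup V] [Module k V]
    (F : ℝ → Submodule k V) (μ : Measure ℝ) : Prop :=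
  if finrank k V = 0 then μ = 0
  else IsProbabilityMeasure μ ∧
    ∀ a : ℝ, μ (Ici a) = ENNReal.ofReal ((finrank k (F a) : ℝ) / (finrank k V : ℝ))

/-- Proposition: for an exact sequence `0 → V' → V → V'' → 0` of finite-dimensional
filtered vector spaces (`V'` with the induced filtration, `V'' = V/V'` with the quotient
filtration) with `V ≠ 0`, one has
`ν_V = (dim V'/dim V)·ν_{V'} + (dim V''/dim V)·ν_{V''}`. -/
theorem stmt8 {k V : Type*} [Field k] [AddCommGroup V] [Module k V]
    [FiniteDimensional k V] [Nontrivial V]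
    (F : ℝ → Submodule k V)
    (hanti : Antitone F)
    (hexh : ∃ a : ℝ, F a = ⊤)
    (hsep : ∃ a : ℝ, F a = ⊥)
    (hlc : ∀ a : ℝ, F a = ⨅ (b : ℝ) (_ : b < a), F b)
    (V' : Submodule k V)
    (μ μ' μ'' : Measure ℝ)
    (hμ : IsAssocMeasure F μ)
    (hμ' : IsAssocMeasure (fun a => (F a).comap V'.subtype) μ')
    (hμ'' : IsAssocMeasure (fun a => (F a).map V'.mkQ) μ'') :
    μ = ENNReal.ofReal ((finrank k V' : ℝ) / (finrank k V : ℝ)) • μ'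
      + ENNReal.ofReal ((finrank k (V ⧸ V') : ℝ) / (finrank k V : ℝ)) • μ'' := by
  classical
  have hd : finrank k V ≠ 0 := finrank_pos.ne'
  have hdR : (0 : ℝ) < (finrank k V : ℝ) := by exact_mod_cast Nat.pos_of_ne_zero hd
  rw [IsAssocMeasure, if_neg hd] at hμ
  obtain ⟨hμprob, hμeq⟩ := hμ
  -- dimension identity
  have hdim : ∀ a : ℝ, finrank k ((F a).comap V'.subtype) + finrank k ((F a).map V'.mkQ)
      = finrank k (F a) := by
    intro a
    have h1 : finrank k ((F a).comap V'.subtype) = finrank k (V' ⊓ F a : Submodule k V) := by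
      rw [← Submodule.map_comap_subtype, Submodule.finrank_map_subtype_eq]
    have h2 := LinearMap.finrank_range_add_finrank_ker (V'.mkQ.comp (F a).subtype)
    have hrange : LinearMap.range (V'.mkQ.comp (F a).subtype) = (F a).map V'.mkQ := by
      rw [LinearMap.range_comp, Submodule.range_subtype]
    have hker : LinearMap.ker (V'.mkQ.comp (F a).subtype)
        = V'.comap (F a).subtype := by
      rw [LinearMap.ker_comp, Submodule.ker_mkQ]
    have h3 : finrank k (V'.comap (F a).subtype)
        = finrank k (F a ⊓ V' : Submodule k V) := by
      rw [← Submodule.map_comap_subtype, Submodule.finrank_map_subtype_eq]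
    rw [hrange, hker, h3] at h2
    rw [h1, inf_comm]
    omega
  have hdimtot : finrank k V' + finrank k (V ⧸ V') = finrank k V := by
    have := Submodule.finrank_quotient_add_finrank V'
    omega
  haveI := hμprob
  refine Measure.ext_of_Ici _ _ ?_
  intro a
  have hterm' : (ENNReal.ofReal ((finrank k V' : ℝ) / (finrank k V : ℝ)) • μ') (Ici a)
      = ENNReal.ofReal ((finrank k ((F a).comap V'.subtype) : ℝ) / (finrank k V : ℝ)) := by
    rw [IsAssocMeasure] at hμ'
    by_cases h' : finrank k V' = 0
    · rw [if_pos h'] at hμ'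
      have hz : finrank k ((F a).comap V'.subtype) = 0 :=
        Nat.le_zero.mp (h' ▸ Submodule.finrank_le _)
      simp [hμ', hz]
    · rw [if_neg h'] at hμ'
      obtain ⟨-, hμ'eq⟩ := hμ'
      have h'R : (0 : ℝ) < (finrank k V' : ℝ) := by exact_mod_cast Nat.pos_of_ne_zero h'
      rw [Measure.smul_apply, smul_eq_mul, hμ'eq a,
        ← ENNReal.ofReal_mul (by positivity)]
      congr 1
      field_simp
  have hterm'' : (ENNReal.ofReal ((finrank k (V ⧸ V') : ℝ) / (finrank k V : ℝ)) • μ'') (Ici a)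
      = ENNReal.ofReal ((finrank k ((F a).map V'.mkQ) : ℝ) / (finrank k V : ℝ)) := by
    rw [IsAssocMeasure] at hμ''
    by_cases h' : finrank k (V ⧸ V') = 0
    · rw [if_pos h'] at hμ''
      have hz : finrank k ((F a).map V'.mkQ) = 0 :=
        Nat.le_zero.mp (h' ▸ Submodule.finrank_le _)
      simp [hμ'', hz]
    · rw [if_neg h'] at hμ''
      obtain ⟨-, hμ''eq⟩ := hμ''
      have h'R : (0 : ℝ) < (finrank k (V ⧸ V') : ℝ) := by exact_mod_cast Nat.pos_of_ne_zero h'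
      rw [Measure.smul_apply, smul_eq_mul, hμ''eq a,
        ← ENNReal.ofReal_mul (by positivity)]
      congr 1
      field_simp
  rw [Measure.add_apply, hterm', hterm'', hμeq a,
    ← ENNReal.ofReal_add (by positivity) (by positivity), ← hdim a]
  push_cast
  ring_nf
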